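/- Let C₁ := 5/6 − log 2 and define H₁ : [0,1) → ℝ by H₁(x) = (C₁/2)(1 − x²) − (1/4)( 3 − 3x² − 4·log 2 + (x−1)²·log(1−x) + (x+1)²·log(1+x) ), where log is the natural logarithm. Then H₁ is three times continuously differentiable on [0,1) with H₁'''(x) = x/(1 − x²) for all x ∈ (0,1), H₁'(0) = 0, H₁''(0) = −C₁, lim_{x→1⁻} H₁(x) = 0, and ∫_0^1 H₁(x) dx = 0. -/

import Mathlib

open Real Set Filter Topology

/-- First derivative within `[0,1)`. -/
noncomputable def dIco (f : ℝ → ℝ) : ℝ → ℝ := derivWithin f (Set.Ico 0 1)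

/-- Third derivative within `[0,1)`. -/
noncomputable def d3Ico (f : ℝ → ℝ) : ℝ → ℝ := dIco (dIco (dIco f))

/-- The explicit correction profile. -/
noncomputable def Gf (c x : ℝ) : ℝ :=
  c / 2 * (1 - x ^ 2) -
    1 / 4 * (3 - 3 * x ^ 2 - 4 * Real.log 2 +
      (x - 1) ^ 2 * Real.log (1 - x) + (x + 1) ^ 2 * Real.log (1 + x))

/-- Its first derivative. -/
noncomputable def G1 (c x : ℝ) : ℝ :=
  -(c * x) + x - 1 / 2 * ((x - 1) * Real.log (1 - x) + (x + 1) * Real.log (1 + x))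

/-- Its second derivative. -/
noncomputable def G2 (c x : ℝ) : ℝ :=
  -c - 1 / 2 * (Real.log (1 - x) + Real.log (1 + x))

/-- An antiderivative of `Gf`. -/
noncomputable def Phi (c x : ℝ) : ℝ :=
  c / 2 * (x - x ^ 3 / 3) -
    1 / 4 * (3 * x - x ^ 3 - 4 * x * Real.log 2 -
      (((1 - x) ^ 3 * Real.log (1 - x)) / 3 - (1 - x) ^ 3 / 9) +
      (((1 + x) ^ 3 * Real.log (1 + x)) / 3 - (1 + x) ^ 3 / 9))

/-- `t² log t → 0` from the right. -/
lemma tendsto_sq_log_right : Tendsto (fun t : ℝ => t ^ 2 * Real.log t) (𝓝[>] 0) (𝓝 0) := by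
  have h := tendsto_log_mul_rpow_nhdsGT_zero (r := 2) (by norm_num)
  refine h.congr' ?_
  filter_upwards [self_mem_nhdsWithin] with t (ht : (0:ℝ) < t)
  rw [show ((2:ℝ)) = ((2:ℕ):ℝ) by norm_num, Real.rpow_natCast, mul_comm]

/-- `u² log u → 0` on a punctured neighborhood of 0. -/
lemma tendsto_sq_log_punct : Tendsto (fun u : ℝ => u ^ 2 * Real.log u) (𝓝[≠] 0) (𝓝 0) := by
  have habs : Tendsto (fun u : ℝ => |u|) (𝓝[≠] (0:ℝ)) (𝓝[>] 0) := by
    apply tendsto_nhdsWithin_of_tendsto_nhds_of_eventually_within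
    · simpa using (continuous_abs.tendsto (0:ℝ)).mono_left nhdsWithin_le_nhds
    · filter_upwards [self_mem_nhdsWithin] with u hu
      exact abs_pos.2 hu
  have := tendsto_sq_log_right.comp habs
  refine this.congr fun u => ?_
  simp [sq_abs, Real.log_abs]

lemma hasDerivAt_cube_log (u : ℝ) (hu : 0 ≤ u) :
    HasDerivAt (fun t : ℝ => t ^ 3 * Real.log t) (3 * u ^ 2 * Real.log u + u ^ 2) u := by
  rcases eq_or_lt_of_le hu with h | h
  · subst h
    rw [show (3:ℝ) * 0 ^ 2 * Real.log 0 + 0 ^ 2 = 0 by norm_num]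
    rw [hasDerivAt_iff_tendsto_slope]
    refine tendsto_sq_log_punct.congr' ?_
    filter_upwards [self_mem_nhdsWithin] with u (hu : u ≠ 0)
    rw [slope_def_field]
    field_simp
    ring
  · have h1 := (hasDerivAt_pow 3 u).mul (Real.hasDerivAt_log h.ne')
    refine h1.congr_deriv ?_
    field_simp
    ring

lemma hasDerivAt_log_one_sub {x : ℝ} (hx : x < 1) :
    HasDerivAt (fun x : ℝ => Real.log (1 - x)) (-(1 - x)⁻¹) x := by
  have h1 : HasDerivAt (fun x : ℝ => 1 - x) (-1) x := by
    simpa using (hasDerivAt_const x (1:ℝ)).fun_sub (hasDerivAt_id x)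
  have := (Real.hasDerivAt_log (by linarith : (1:ℝ) - x ≠ 0)).comp x h1
  simpa [Function.comp_def] using this

lemma hasDerivAt_log_one_add {x : ℝ} (hx : -1 < x) :
    HasDerivAt (fun x : ℝ => Real.log (1 + x)) ((1 + x)⁻¹) x := by
  have h1 : HasDerivAt (fun x : ℝ => 1 + x) 1 x := by
    simpa using (hasDerivAt_const x (1:ℝ)).fun_add (hasDerivAt_id x)
  have := (Real.hasDerivAt_log (by linarith : (1:ℝ) + x ≠ 0)).comp x h1
  simpa [Function.comp_def] using this

lemma hasDerivAt_Gf {c x : ℝ} (hx : x ∈ Set.Ioo (-1:ℝ) 1) :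
    HasDerivAt (Gf c) (G1 c x) x := by
  obtain ⟨hx1, hx2⟩ := hx
  have hl1 := hasDerivAt_log_one_sub hx2
  have hl2 := hasDerivAt_log_one_add hx1
  have hm1 : HasDerivAt (fun x : ℝ => x - 1) 1 x := (hasDerivAt_id x).sub_const 1
  have hp1 : HasDerivAt (fun x : ℝ => x + 1) 1 x := (hasDerivAt_id x).add_const 1
  have hA : HasDerivAt (fun x : ℝ => (x - 1) ^ 2 * Real.log (1 - x))
      ((2 * (x - 1) ^ 1 * 1) * Real.log (1 - x) + (x - 1) ^ 2 * (-(1 - x)⁻¹)) x :=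
    (hm1.pow 2).mul hl1
  have hB : HasDerivAt (fun x : ℝ => (x + 1) ^ 2 * Real.log (1 + x))
      ((2 * (x + 1) ^ 1 * 1) * Real.log (1 + x) + (x + 1) ^ 2 * ((1 + x)⁻¹)) x :=
    (hp1.pow 2).mul hl2
  have hq : HasDerivAt (fun x : ℝ => c / 2 * (1 - x ^ 2)) (c / 2 * (0 - 2 * x ^ 1)) x :=
    ((hasDerivAt_const x (1:ℝ)).sub (hasDerivAt_pow 2 x)).const_mul _
  have hpoly : HasDerivAt (fun x : ℝ => 3 - 3 * x ^ 2 - 4 * Real.log 2)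
      (0 - 3 * (2 * x ^ 1) - 0) x := by
    exact (((hasDerivAt_const x (3:ℝ)).sub ((hasDerivAt_pow 2 x).const_mul 3)).sub
      (hasDerivAt_const x (4 * Real.log 2)))
  have h := hq.sub (((hpoly.add hA).add hB).const_mul (1/4 : ℝ))
  have hne1 : (1:ℝ) - x ≠ 0 := by linarith
  have hne2 : (1:ℝ) + x ≠ 0 := by linarith
  refine h.congr_deriv ?_
  unfold G1
  field_simp
  ring

lemma hasDerivAt_G1 {c x : ℝ} (hx : x ∈ Set.Ioo (-1:ℝ) 1) :
    HasDerivAt (G1 c) (G2 c x) x := by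
  obtain ⟨hx1, hx2⟩ := hx
  have hl1 := hasDerivAt_log_one_sub hx2
  have hl2 := hasDerivAt_log_one_add hx1
  have hm1 : HasDerivAt (fun x : ℝ => x - 1) 1 x := (hasDerivAt_id x).sub_const 1
  have hp1 : HasDerivAt (fun x : ℝ => x + 1) 1 x := (hasDerivAt_id x).add_const 1
  have hA : HasDerivAt (fun x : ℝ => (x - 1) * Real.log (1 - x))
      (1 * Real.log (1 - x) + (x - 1) * (-(1 - x)⁻¹)) x := hm1.mul hl1
  have hB : HasDerivAt (fun x : ℝ => (x + 1) * Real.log (1 + x))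
      (1 * Real.log (1 + x) + (x + 1) * ((1 + x)⁻¹)) x := hp1.mul hl2
  have hlin : HasDerivAt (fun x : ℝ => -(c * x) + x) (-(c * 1) + 1) x := by
    exact (((hasDerivAt_id x).const_mul c).neg).add (hasDerivAt_id x)
  have h := hlin.sub ((hA.add hB).const_mul (1/2 : ℝ))
  have hne1 : (1:ℝ) - x ≠ 0 := by linarith
  have hne2 : (1:ℝ) + x ≠ 0 := by linarith
  refine h.congr_deriv ?_
  unfold G2
  field_simp
  ring

lemma hasDerivAt_G2 {c x : ℝ} (hx : x ∈ Set.Ioo (-1:ℝ) 1) :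
    HasDerivAt (G2 c) (x / (1 - x ^ 2)) x := by
  obtain ⟨hx1, hx2⟩ := hx
  have hl1 := hasDerivAt_log_one_sub hx2
  have hl2 := hasDerivAt_log_one_add hx1
  have h := ((hasDerivAt_const x (-c)).sub ((hl1.add hl2).const_mul (1/2 : ℝ)))
  have hne1 : (1:ℝ) - x ≠ 0 := by linarith
  have hne2 : (1:ℝ) + x ≠ 0 := by linarith
  have hne3 : (1:ℝ) - x ^ 2 ≠ 0 := by nlinarith
  refine h.congr_deriv ?_
  field_simp
  ring

lemma contDiffOn_Gf (c : ℝ) : ContDiffOn ℝ 3 (Gf c) (Set.Ioo (-1:ℝ) 1) := by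
  intro x hx
  apply ContDiffAt.contDiffWithinAt
  have hne1 : (1:ℝ) - x ≠ 0 := by linarith [hx.2]
  have hne2 : (1:ℝ) + x ≠ 0 := by linarith [hx.1]
  have hl1 : ContDiffAt ℝ 3 (fun x : ℝ => Real.log (1 - x)) x := by
    have h0 : ContDiffAt ℝ 3 (Real.log ∘ fun x : ℝ => 1 - x) x :=
      ContDiffAt.comp x (Real.contDiffAt_log.mpr hne1)
        ((contDiffAt_const (c := (1:ℝ))).sub contDiffAt_id)
    simpa [Function.comp_def] using h0
  have hl2 : ContDiffAt ℝ 3 (fun x : ℝ => Real.log (1 + x)) x := by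
    have h0 : ContDiffAt ℝ 3 (Real.log ∘ fun x : ℝ => 1 + x) x :=
      ContDiffAt.comp x (Real.contDiffAt_log.mpr hne2)
        ((contDiffAt_const (c := (1:ℝ))).add contDiffAt_id)
    simpa [Function.comp_def] using h0
  unfold Gf
  refine ContDiffAt.sub ?_ (ContDiffAt.mul contDiffAt_const ?_)
  · exact contDiffAt_const.mul (contDiffAt_const.sub (contDiffAt_id.pow 2))
  · refine ContDiffAt.add (ContDiffAt.add ?_ ?_) ?_
    · exact (contDiffAt_const.sub (contDiffAt_const.mul (contDiffAt_id.pow 2))).sub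
        contDiffAt_const
    · exact ((contDiffAt_id.sub contDiffAt_const).pow 2).mul hl1
    · exact ((contDiffAt_id.add contDiffAt_const).pow 2).mul hl2

lemma hasDerivAt_Phi {c x : ℝ} (hx : x ∈ Set.Icc (0:ℝ) 1) :
    HasDerivAt (Phi c) (Gf c x) x := by
  obtain ⟨hx0, hx1⟩ := hx
  have hu : (0:ℝ) ≤ 1 - x := by linarith
  have hne2 : (1:ℝ) + x ≠ 0 := by linarith
  have hm : HasDerivAt (fun x : ℝ => 1 - x) (-1) x := by
    simpa using (hasDerivAt_const x (1:ℝ)).fun_sub (hasDerivAt_id x)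
  have hp : HasDerivAt (fun x : ℝ => 1 + x) 1 x := by
    simpa using (hasDerivAt_const x (1:ℝ)).fun_add (hasDerivAt_id x)
  have hcube : HasDerivAt (fun x : ℝ => (1 - x) ^ 3 * Real.log (1 - x))
      ((3 * (1 - x) ^ 2 * Real.log (1 - x) + (1 - x) ^ 2) * (-1)) x := by
    have := (hasDerivAt_cube_log (1 - x) hu).comp x hm
    simpa [Function.comp_def] using this
  have h3m : HasDerivAt (fun x : ℝ => (1 - x) ^ 3) (3 * (1 - x) ^ 2 * (-1)) x := by
    simpa using hm.fun_pow 3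
  have h3p : HasDerivAt (fun x : ℝ => (1 + x) ^ 3) (3 * (1 + x) ^ 2 * 1) x := by
    simpa using hp.fun_pow 3
  have hA : HasDerivAt (fun x : ℝ => ((1 - x) ^ 3 * Real.log (1 - x)) / 3 - (1 - x) ^ 3 / 9)
      (((3 * (1 - x) ^ 2 * Real.log (1 - x) + (1 - x) ^ 2) * (-1)) / 3 -
        (3 * (1 - x) ^ 2 * (-1)) / 9) x := (hcube.div_const 3).sub (h3m.div_const 9)
  have hB1 : HasDerivAt (fun x : ℝ => (1 + x) ^ 3 * Real.log (1 + x))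
      ((3 * (1 + x) ^ 2 * 1) * Real.log (1 + x) + (1 + x) ^ 3 * (1 + x)⁻¹) x :=
    h3p.mul (hasDerivAt_log_one_add (by linarith))
  have hB : HasDerivAt (fun x : ℝ => ((1 + x) ^ 3 * Real.log (1 + x)) / 3 - (1 + x) ^ 3 / 9)
      (((3 * (1 + x) ^ 2 * 1) * Real.log (1 + x) + (1 + x) ^ 3 * (1 + x)⁻¹) / 3 -
        (3 * (1 + x) ^ 2 * 1) / 9) x := (hB1.div_const 3).sub (h3p.div_const 9)
  have hq : HasDerivAt (fun x : ℝ => c / 2 * (x - x ^ 3 / 3))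
      (c / 2 * (1 - (3 * x ^ 2) / 3)) x := by
    exact ((hasDerivAt_id x).sub ((hasDerivAt_pow 3 x).div_const 3)).const_mul _
  have hpoly : HasDerivAt (fun x : ℝ => 3 * x - x ^ 3 - 4 * x * Real.log 2)
      (3 * 1 - 3 * x ^ 2 - 4 * 1 * Real.log 2) x := by
    have h1 : HasDerivAt (fun x : ℝ => 3 * x) (3 * 1) x := (hasDerivAt_id x).const_mul 3
    have h2 : HasDerivAt (fun x : ℝ => 4 * x * Real.log 2) (4 * 1 * Real.log 2) x :=
      ((hasDerivAt_id x).const_mul 4).mul_const _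
    simpa using (h1.fun_sub (by simpa using hasDerivAt_pow 3 x)).fun_sub h2
  have h := hq.sub (((hpoly.sub hA).add hB).const_mul (1/4 : ℝ))
  refine h.congr_deriv ?_
  unfold Gf
  field_simp
  ring

lemma tendsto_sq_log_one_sub :
    Tendsto (fun x : ℝ => (x - 1) ^ 2 * Real.log (1 - x)) (𝓝[<] (1:ℝ)) (𝓝 0) := by
  have hmap : Tendsto (fun x : ℝ => 1 - x) (𝓝[<] (1:ℝ)) (𝓝[>] (0:ℝ)) := by
    apply tendsto_nhdsWithin_of_tendsto_nhds_of_eventually_within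
    · have h0 : Continuous (fun x : ℝ => 1 - x) := by fun_prop
      have h : Tendsto (fun x : ℝ => 1 - x) (nhds 1) (nhds 0) := by simpa using h0.tendsto (1:ℝ)
      exact h.mono_left nhdsWithin_le_nhds
    · filter_upwards [self_mem_nhdsWithin] with x (hx : x < 1)
      simpa using sub_pos.2 hx
  have := tendsto_sq_log_right.comp hmap
  refine this.congr fun x => ?_
  simp only [Function.comp]
  ring_nf

lemma tendsto_Gf (c : ℝ) : Tendsto (Gf c) (𝓝[<] (1:ℝ)) (𝓝 0) := by
  have hP : ContinuousAt (fun x : ℝ => c / 2 * (1 - x ^ 2) -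
      1 / 4 * (3 - 3 * x ^ 2 - 4 * Real.log 2 + (x + 1) ^ 2 * Real.log (1 + x))) 1 := by
    have hlog : ContinuousAt (fun x : ℝ => Real.log (1 + x)) 1 := by
      have := (Real.continuousAt_log (by norm_num : (1:ℝ) + 1 ≠ 0)).comp
        ((continuous_const.add continuous_id).continuousAt (x := (1:ℝ)))
      simpa [Function.comp_def] using this
    fun_prop
  have h1 := (hP.tendsto.mono_left nhdsWithin_le_nhds).sub
    (tendsto_sq_log_one_sub.const_mul (1/4 : ℝ))
  have hval : (c / 2 * (1 - (1:ℝ) ^ 2) -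
      1 / 4 * (3 - 3 * 1 ^ 2 - 4 * Real.log 2 + (1 + 1) ^ 2 * Real.log (1 + 1))) - 1/4 * 0 = 0 := by
    norm_num
  rw [hval] at h1
  refine h1.congr fun x => ?_
  unfold Gf
  ring

lemma continuousOn_Gf (c : ℝ) : ContinuousOn (Gf c) (Set.Icc (0:ℝ) 1) := by
  intro x hx
  rcases eq_or_lt_of_le hx.2 with h1 | h1
  · have hGf1 : Gf c 1 = 0 := by unfold Gf; norm_num
    have hcw : ContinuousWithinAt (Gf c) (Set.Iio 1) 1 := by
      unfold ContinuousWithinAt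
      rw [hGf1]
      exact tendsto_Gf c
    have h2 : ContinuousWithinAt (Gf c) (insert (1:ℝ) (Set.Iio 1)) 1 := by
      rwa [continuousWithinAt_insert_self]
    subst h1
    refine h2.mono (fun y hy => ?_)
    rcases eq_or_lt_of_le hy.2 with h | h
    · exact Or.inl h
    · exact Or.inr h
  · exact (hasDerivAt_Gf (c := c) (x := x) ⟨by linarith [hx.1], h1⟩).continuousAt.continuousWithinAt

/-- The first-order correction profile for strong contact-line friction with mobility exponent
`n = 2`: with `C₁ = 5/6 − log 2`, the function
`H₁(x) = (C₁/2)(1 − x²) − (1/4)(3 − 3x² − 4 log 2 + (x−1)² log(1−x) + (x+1)² log(1+x))`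
is C³ on `[0,1)` with `H₁''' (x) = x/(1 − x²)` on `(0,1)`, `H₁'(0) = 0`, `H₁''(0) = −C₁`,
`H₁(x) → 0` as `x → 1⁻`, and `∫₀¹ H₁ = 0`. -/
theorem correction_profile_n2
    (C₁ : ℝ) (hC₁ : C₁ = 5 / 6 - Real.log 2)
    (H₁ : ℝ → ℝ)
    (hH₁ : ∀ x ∈ Set.Ico (0:ℝ) 1, H₁ x =
      C₁ / 2 * (1 - x ^ 2) -
        1 / 4 * (3 - 3 * x ^ 2 - 4 * Real.log 2 +
          (x - 1) ^ 2 * Real.log (1 - x) + (x + 1) ^ 2 * Real.log (1 + x))) :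
    ContDiffOn ℝ 3 H₁ (Set.Ico 0 1) ∧
    (∀ x ∈ Set.Ioo (0:ℝ) 1, d3Ico H₁ x = x / (1 - x ^ 2)) ∧
    dIco H₁ 0 = 0 ∧
    dIco (dIco H₁) 0 = -C₁ ∧
    Filter.Tendsto H₁ (nhdsWithin 1 (Set.Iio 1)) (nhds 0) ∧
    (∫ x in (0:ℝ)..1, H₁ x) = 0 := by
  have hsub : Set.Ico (0:ℝ) 1 ⊆ Set.Ioo (-1:ℝ) 1 := fun x hx => ⟨by linarith [hx.1], hx.2⟩
  have hEqOn : Set.EqOn H₁ (Gf C₁) (Set.Ico 0 1) := fun x hx => hH₁ x hx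
  have hU : UniqueDiffOn ℝ (Set.Ico (0:ℝ) 1) := uniqueDiffOn_Ico 0 1
  have h0mem : (0:ℝ) ∈ Set.Ico (0:ℝ) 1 := ⟨le_refl 0, by norm_num⟩
  have hd1 : ∀ x ∈ Set.Ico (0:ℝ) 1, dIco H₁ x = G1 C₁ x := by
    intro x hx
    have hc : derivWithin H₁ (Set.Ico 0 1) x = derivWithin (Gf C₁) (Set.Ico 0 1) x :=
      derivWithin_congr hEqOn (hEqOn hx)
    rw [dIco, hc]
    exact ((hasDerivAt_Gf (hsub hx)).hasDerivWithinAt).derivWithin (hU x hx)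
  have hd2 : ∀ x ∈ Set.Ico (0:ℝ) 1, dIco (dIco H₁) x = G2 C₁ x := by
    intro x hx
    have hc : derivWithin (dIco H₁) (Set.Ico 0 1) x = derivWithin (G1 C₁) (Set.Ico 0 1) x :=
      derivWithin_congr hd1 (hd1 x hx)
    rw [dIco, hc]
    exact ((hasDerivAt_G1 (hsub hx)).hasDerivWithinAt).derivWithin (hU x hx)
  have hd3 : ∀ x ∈ Set.Ico (0:ℝ) 1, d3Ico H₁ x = x / (1 - x ^ 2) := by
    intro x hx
    have hc : derivWithin (dIco (dIco H₁)) (Set.Ico 0 1) x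
        = derivWithin (G2 C₁) (Set.Ico 0 1) x := derivWithin_congr hd2 (hd2 x hx)
    rw [d3Ico, dIco, hc]
    exact ((hasDerivAt_G2 (hsub hx)).hasDerivWithinAt).derivWithin (hU x hx)
  refine ⟨?_, ?_, ?_, ?_, ?_, ?_⟩
  · exact ((contDiffOn_Gf C₁).mono hsub).congr hEqOn
  · exact fun x hx => hd3 x ⟨hx.1.le, hx.2⟩
  · rw [hd1 0 h0mem]
    simp [G1]
  · rw [hd2 0 h0mem]
    simp [G2]
  · refine (tendsto_Gf C₁).congr' ?_
    filter_upwards [Ioo_mem_nhdsLT_of_mem (show (1:ℝ) ∈ Set.Ioc 0 1 by norm_num)] with x hx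
    exact (hH₁ x ⟨hx.1.le, hx.2⟩).symm
  · have hint : IntervalIntegrable (Gf C₁) MeasureTheory.volume 0 1 := by
      apply ContinuousOn.intervalIntegrable
      rw [Set.uIcc_of_le (zero_le_one :(0:ℝ) ≤ 1)]
      exact continuousOn_Gf C₁
    have hcongr : (∫ x in (0:ℝ)..1, H₁ x) = ∫ x in (0:ℝ)..1, Gf C₁ x := by
      apply intervalIntegral.integral_congr_ae
      have hns : (MeasureTheory.volume : MeasureTheory.Measure ℝ) {(1:ℝ)} = 0 :=
        MeasureTheory.measure_singleton 1
      filter_upwards [MeasureTheory.measure_eq_zero_iff_ae_notMem.mp hns] with x hx1 hx2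
      rw [Set.uIoc_of_le (zero_le_one)] at hx2
      have : x ∈ Set.Ico (0:ℝ) 1 := ⟨hx2.1.le, lt_of_le_of_ne hx2.2 (by simpa using hx1)⟩
      exact hH₁ x this
    have hftc : (∫ x in (0:ℝ)..1, Gf C₁ x) = Phi C₁ 1 - Phi C₁ 0 := by
      apply intervalIntegral.integral_eq_sub_of_hasDerivAt
      · intro x hx
        rw [Set.uIcc_of_le (zero_le_one)] at hx
        exact hasDerivAt_Phi hx
      · exact hint
    have hval : Phi C₁ 1 - Phi C₁ 0 = 0 := by
      unfold Phi
      rw [hC₁]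
      norm_num [Real.log_one]
      ring
    rw [hcongr, hftc, hval]
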